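/- Let F be a strictly increasing continuous cdf on an interval (a,b) and let F_{ξ_T} be the cdf of a positive random variable ξ_T with positive density on (0,∞). Fix c ∈ (a,b) with F(c) > 0 and define U(x) = ∫_c^x F_{ξ_T}^{-1}(1 − F(y)) dy for x ∈ (a,b). Then U is continuously differentiable, strictly increasing, and strictly concave on (a,b), with U'(x) = F_{ξ_T}^{-1}(1 − F(x)), lim_{x→a+} U'(x) = +∞, and lim_{x→b−} U'(x) = 0. -/
import Mathlib


open MeasureTheory Set Filter Topology

/-- The utility `U(x) = ∫_c^x F_ξ⁻¹(1 − F(y)) dy` built from a strictly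
increasing continuous cdf `F` on `(a,b)` and the quantile function of a pricing kernel
with positive density on `(0,∞)` is continuously differentiable, strictly increasing
and strictly concave on `(a,b)`, with `U' = F_ξ⁻¹(1 − F)`, `U'(a⁺) = +∞`, `U'(b⁻) = 0`. -/
theorem utility_from_distribution
    (a b c : ℝ) (hab : a < b) (hc : c ∈ Set.Ioo a b)
    (F : ℝ → ℝ) (hFcont : ContinuousOn F (Set.Ioo a b))
    (hFsm : StrictMonoOn F (Set.Ioo a b))
    (hFa : Tendsto F (𝓝[>] a) (𝓝 0)) (hFb : Tendsto F (𝓝[<] b) (𝓝 1))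
    (hFc : 0 < F c)
    (fξ Fξ : ℝ → ℝ)
    (hfpos : ∀ t > (0:ℝ), 0 < fξ t) (hfzero : ∀ t ≤ (0:ℝ), fξ t = 0)
    (hFξ : ∀ x, Fξ x = ∫ t in Set.Iic x, fξ t)
    (hFξ1 : Tendsto Fξ atTop (𝓝 1))
    (q : ℝ → ℝ) (hq : ∀ p, q p = sInf {t : ℝ | p ≤ Fξ t})
    (U : ℝ → ℝ) (hU : ∀ x, U x = ∫ y in c..x, q (1 - F y)) :
    (∀ x ∈ Set.Ioo a b, HasDerivAt U (q (1 - F x)) x) ∧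
    ContinuousOn (fun x => q (1 - F x)) (Set.Ioo a b) ∧
    StrictMonoOn U (Set.Ioo a b) ∧
    StrictConcaveOn ℝ (Set.Ioo a b) U ∧
    Tendsto (fun x => q (1 - F x)) (𝓝[>] a) atTop ∧
    Tendsto (fun x => q (1 - F x)) (𝓝[<] b) (𝓝 0) := by
  -- nonnegativity of the density
  have hfnn : ∀ t, 0 ≤ fξ t := by
    intro t
    rcases le_or_gt t 0 with h | h
    · exact (hfzero t h).ge
    · exact (hfpos t h).le
  -- integrability on every `Iic x`
  have hint : ∀ x : ℝ, IntegrableOn fξ (Set.Iic x) := by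
    intro x
    by_contra hx
    have h0 : ∀ y ≥ x, Fξ y = 0 := by
      intro y hy
      rw [hFξ]
      exact MeasureTheory.integral_undef
        (fun h => hx (MeasureTheory.IntegrableOn.mono_set h (Set.Iic_subset_Iic.2 hy)))
    have h1 : Tendsto (fun _ : ℝ => (0:ℝ)) atTop (𝓝 1) :=
      hFξ1.congr' (eventually_atTop.2 ⟨x, fun y hy => h0 y hy⟩)
    exact one_ne_zero (tendsto_nhds_unique h1 tendsto_const_nhds)
  have hioc : ∀ x y : ℝ, IntegrableOn fξ (Set.Ioc x y) := fun x y =>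
    (hint y).mono_set Set.Ioc_subset_Iic_self
  have hii : ∀ x y : ℝ, IntervalIntegrable fξ volume x y := fun x y =>
    ⟨hioc x y, hioc y x⟩
  have hFdiff : ∀ x y : ℝ, Fξ y - Fξ x = ∫ t in x..y, fξ t := by
    intro x y
    rw [hFξ, hFξ]
    exact intervalIntegral.integral_Iic_sub_Iic (hint x) (hint y)
  -- `Fξ` is continuous
  have hFξcont : Continuous Fξ := by
    have heq : Fξ = fun y => Fξ 0 + ∫ t in (0:ℝ)..y, fξ t := by
      funext y
      have := hFdiff 0 y
      linarith
    rw [heq]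
    exact continuous_const.add (intervalIntegral.continuous_primitive hii 0)
  -- `Fξ` vanishes on the nonpositive reals
  have hFξ0 : ∀ t ≤ (0:ℝ), Fξ t = 0 := by
    intro t ht
    rw [hFξ, MeasureTheory.setIntegral_congr_fun measurableSet_Iic
      (g := fun _ => (0:ℝ)) (fun s hs => hfzero s (le_trans hs ht))]
    simp
  -- monotonicity of `Fξ`
  have hFmono : Monotone Fξ := by
    intro x y hxy
    have h1 := hFdiff x y
    have h2 : 0 ≤ ∫ t in x..y, fξ t :=
      intervalIntegral.integral_nonneg hxy (fun t _ => hfnn t)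
    linarith
  have hFsmι : StrictMonoOn Fξ (Set.Ici 0) := by
    intro x hx y _ hxy
    have h2 : 0 < ∫ t in x..y, fξ t :=
      intervalIntegral.intervalIntegral_pos_of_pos_on (hii x y)
        (fun t ht => hfpos t (lt_of_le_of_lt hx ht.1)) hxy
    have h1 := hFdiff x y
    linarith
  have hFle1 : ∀ t, Fξ t ≤ 1 := fun t => hFmono.ge_of_tendsto hFξ1 t
  have hFlt1 : ∀ t, Fξ t < 1 := by
    intro t
    rcases le_or_gt t 0 with h | h
    · rw [hFξ0 t h]; norm_num
    · exact lt_of_lt_of_le (hFsmι (Set.mem_Ici.2 h.le) (Set.mem_Ici.2 (by linarith : (0:ℝ) ≤ t + 1)) (lt_add_one t))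
        (hFle1 (t + 1))
  have hFξpos : ∀ t, 0 < t → 0 < Fξ t := by
    intro t ht
    have := hFsmι (Set.mem_Ici.2 (le_refl 0)) (Set.mem_Ici.2 ht.le) ht
    rwa [hFξ0 0 le_rfl] at this
  -- positivity of elements of the quantile set
  have hposS : ∀ p t : ℝ, 0 < p → p ≤ Fξ t → 0 < t := by
    intro p t hp hpt
    by_contra h
    push_neg at h
    rw [hFξ0 t h] at hpt
    linarith
  -- the quantile satisfies `Fξ (q p) = p` and `0 < q p` on `(0,1)`
  have hqspec : ∀ p ∈ Set.Ioo (0:ℝ) 1, Fξ (q p) = p ∧ 0 < q p := by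
    intro p hp
    have hSne : {t : ℝ | p ≤ Fξ t}.Nonempty := by
      obtain ⟨t, ht⟩ := (hFξ1.eventually (eventually_gt_nhds hp.2)).exists
      exact ⟨t, ht.le⟩
    have hSbdd : BddBelow {t : ℝ | p ≤ Fξ t} :=
      ⟨0, fun t ht => (hposS p t hp.1 ht).le⟩
    have hSclosed : IsClosed {t : ℝ | p ≤ Fξ t} := isClosed_Ici.preimage hFξcont
    have hmem : q p ∈ {t : ℝ | p ≤ Fξ t} := by
      rw [hq]; exact hSclosed.csInf_mem hSne hSbdd
    have hqpos : 0 < q p := hposS p _ hp.1 hmem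
    refine ⟨le_antisymm ?_ hmem, hqpos⟩
    by_contra h
    push_neg at h
    have h1 : Fξ ⁻¹' Set.Ioi p ∈ 𝓝[<] (q p) :=
      mem_nhdsWithin_of_mem_nhds (hFξcont.continuousAt.preimage_mem_nhds (Ioi_mem_nhds h))
    obtain ⟨t, ht⟩ := Filter.nonempty_of_mem (Filter.inter_mem h1 self_mem_nhdsWithin)
    have hmemt : p ≤ Fξ t := ht.1.le
    have h2 : q p ≤ t := by
      rw [hq]; exact csInf_le hSbdd hmemt
    exact absurd ht.2 (not_lt.2 h2)
  -- strict monotonicity of `q` on `(0,1)`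
  have hqmono : StrictMonoOn q (Set.Ioo 0 1) := by
    intro p hp p' hp' hpp'
    obtain ⟨hF1, _⟩ := hqspec p hp
    obtain ⟨hF2, _⟩ := hqspec p' hp'
    by_contra h
    push_neg at h
    have := hFmono h
    rw [hF1, hF2] at this
    linarith
  -- continuity of `q` on `(0,1)`
  have hqcont : ContinuousOn q (Set.Ioo 0 1) := by
    intro p₀ hp₀
    obtain ⟨hF0, hq0⟩ := hqspec p₀ hp₀
    rw [Metric.continuousWithinAt_iff]
    intro ε hε
    set t₀ := q p₀ with ht₀
    set l := max 0 (t₀ - ε) with hl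
    have hl0 : 0 ≤ l := le_max_left _ _
    have hllt : l < t₀ := max_lt hq0 (by linarith)
    have hFl : Fξ l < p₀ := by
      rw [← hF0]; exact hFsmι (Set.mem_Ici.2 hl0) (Set.mem_Ici.2 (hl0.trans hllt.le)) hllt
    have hFr : p₀ < Fξ (t₀ + ε) := by
      rw [← hF0]; exact hFsmι (Set.mem_Ici.2 hq0.le) (Set.mem_Ici.2 (by linarith)) (by linarith)
    refine ⟨min (p₀ - Fξ l) (Fξ (t₀ + ε) - p₀), lt_min (by linarith) (by linarith), ?_⟩
    intro p hp hdist
    rw [Real.dist_eq] at hdist ⊢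
    have habs := abs_lt.1 hdist
    have hmin1 := min_le_left (p₀ - Fξ l) (Fξ (t₀ + ε) - p₀)
    have hmin2 := min_le_right (p₀ - Fξ l) (Fξ (t₀ + ε) - p₀)
    have h1 : Fξ l < p := by linarith [habs.1]
    have h2 : p < Fξ (t₀ + ε) := by linarith [habs.2]
    obtain ⟨hFp, hqp⟩ := hqspec p hp
    have hql : l < q p := by
      by_contra h
      push_neg at h
      have := hFmono h
      rw [hFp] at this
      linarith
    have hqr : q p < t₀ + ε := by
      by_contra h
      push_neg at h
      have := hFmono h
      rw [hFp] at this
      linarith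
    have hle : t₀ - ε ≤ l := le_max_right _ _
    rw [abs_lt]
    constructor <;> linarith
  -- `F` maps `(a,b)` into `(0,1)`
  have hF01 : ∀ x ∈ Set.Ioo a b, F x ∈ Set.Ioo (0:ℝ) 1 := by
    intro x hx
    constructor
    · have hy : (a + x) / 2 ∈ Set.Ioo a b := ⟨by linarith [hx.1], by linarith [hx.1, hx.2]⟩
      have hyx : (a + x) / 2 < x := by linarith [hx.1]
      have h0 : 0 ≤ F ((a + x) / 2) := by
        refine le_of_tendsto hFa ?_
        filter_upwards [Ioo_mem_nhdsGT_of_mem (Set.mem_Ico.2 ⟨le_rfl, hy.1⟩)] with z hz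
        exact (hFsm ⟨hz.1, hz.2.trans hy.2⟩ hy hz.2).le
      exact lt_of_le_of_lt h0 (hFsm hy hx hyx)
    · have hy : (x + b) / 2 ∈ Set.Ioo a b := ⟨by linarith [hx.1, hx.2], by linarith [hx.2]⟩
      have hxy : x < (x + b) / 2 := by linarith [hx.2]
      have h1 : F ((x + b) / 2) ≤ 1 := by
        refine ge_of_tendsto hFb ?_
        filter_upwards [Ioo_mem_nhdsLT_of_mem (Set.mem_Ioc.2 ⟨hy.2, le_rfl⟩)] with z hz
        exact (hFsm hy ⟨hy.1.trans hz.1, hz.2⟩ hz.1).le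
      exact lt_of_lt_of_le (hFsm hx hy hxy) h1
  have hmapsTo : ∀ x ∈ Set.Ioo a b, 1 - F x ∈ Set.Ioo (0:ℝ) 1 := by
    intro x hx
    obtain ⟨h1, h2⟩ := hF01 x hx
    exact ⟨by linarith, by linarith⟩
  -- continuity of the marginal utility
  have hgcont : ContinuousOn (fun x => q (1 - F x)) (Set.Ioo a b) :=
    hqcont.comp (continuousOn_const.sub hFcont) hmapsTo
  -- replace `U` by the explicit integral
  have hUeq : U = fun x => ∫ y in c..x, q (1 - F y) := funext hU
  subst hUeq
  -- derivative
  have hderiv : ∀ x ∈ Set.Ioo a b,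
      HasDerivAt (fun x => ∫ y in c..x, q (1 - F y)) (q (1 - F x)) x := by
    intro x hx
    have hsub : Set.uIcc c x ⊆ Set.Ioo a b := Set.ordConnected_Ioo.uIcc_subset hc hx
    exact intervalIntegral.integral_hasDerivAt_right
      ((hgcont.mono hsub).intervalIntegrable)
      (hgcont.stronglyMeasurableAtFilter isOpen_Ioo x hx)
      (hgcont.continuousAt (isOpen_Ioo.mem_nhds hx))
  have hcontU : ContinuousOn (fun x => ∫ y in c..x, q (1 - F y)) (Set.Ioo a b) :=
    fun x hx => (hderiv x hx).continuousAt.continuousWithinAt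
  -- strict monotonicity
  have hUmono : StrictMonoOn (fun x => ∫ y in c..x, q (1 - F y)) (Set.Ioo a b) := by
    refine strictMonoOn_of_deriv_pos (convex_Ioo a b) hcontU ?_
    rw [interior_Ioo]
    intro x hx
    rw [(hderiv x hx).deriv]
    exact (hqspec _ (hmapsTo x hx)).2
  -- strict concavity
  have hanti : StrictAntiOn (deriv (fun x => ∫ y in c..x, q (1 - F y)))
      (interior (Set.Ioo a b)) := by
    rw [interior_Ioo]
    intro x hx y hy hxy
    rw [(hderiv x hx).deriv, (hderiv y hy).deriv]
    exact hqmono (hmapsTo y hy) (hmapsTo x hx) (by linarith [hFsm hx hy hxy])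
  have hconc : StrictConcaveOn ℝ (Set.Ioo a b) (fun x => ∫ y in c..x, q (1 - F y)) :=
    hanti.strictConcaveOn_of_deriv (convex_Ioo a b) hcontU
  -- limit at `a`
  have hlima : Tendsto (fun x => q (1 - F x)) (𝓝[>] a) atTop := by
    rw [tendsto_atTop]
    intro M
    have hM' : (0:ℝ) < max M 1 := lt_of_lt_of_le one_pos (le_max_right _ _)
    have hFM : Fξ (max M 1) < 1 := hFlt1 _
    have hFMpos : 0 < Fξ (max M 1) := hFξpos _ hM'
    have hev1 : ∀ᶠ x in 𝓝[>] a, F x < 1 - Fξ (max M 1) :=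
      hFa.eventually (eventually_lt_nhds (by linarith))
    have hev2 : ∀ᶠ x in 𝓝[>] a, x ∈ Set.Ioo a b :=
      Ioo_mem_nhdsGT_of_mem (Set.mem_Ico.2 ⟨le_rfl, hab⟩)
    filter_upwards [hev1, hev2] with x h1 h2
    obtain ⟨hFp, hqp⟩ := hqspec (1 - F x) (hmapsTo x h2)
    have hge : max M 1 ≤ q (1 - F x) := by
      by_contra h
      push_neg at h
      have := hFsmι (Set.mem_Ici.2 hqp.le) (Set.mem_Ici.2 hM'.le) h
      rw [hFp] at this
      linarith
    exact le_trans (le_max_left _ _) hge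
  -- limit at `b`
  have hlimb : Tendsto (fun x => q (1 - F x)) (𝓝[<] b) (𝓝 0) := by
    rw [Metric.tendsto_nhds]
    intro ε hε
    have hFε : 0 < Fξ ε := hFξpos ε hε
    have hev1 : ∀ᶠ x in 𝓝[<] b, 1 - Fξ ε < F x :=
      hFb.eventually (eventually_gt_nhds (by linarith))
    have hev2 : ∀ᶠ x in 𝓝[<] b, x ∈ Set.Ioo a b :=
      Ioo_mem_nhdsLT_of_mem (Set.mem_Ioc.2 ⟨hab, le_rfl⟩)
    filter_upwards [hev1, hev2] with x h1 h2
    obtain ⟨hFp, hqp⟩ := hqspec (1 - F x) (hmapsTo x h2)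
    have hlt : q (1 - F x) < ε := by
      by_contra h
      push_neg at h
      have := hFmono h
      rw [hFp] at this
      linarith
    rw [Real.dist_eq, sub_zero, abs_of_pos hqp]
    exact hlt
  exact ⟨hderiv, hgcont, hUmono, hconc, hlima, hlimb⟩
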